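/- (One-time composition: IND-OT iKEM + IND-OT DEM ⇒ IND-OT hybrid encryption.) Let (X, Z) be jointly distributed random variables on finite sets, let R be uniformly distributed on a finite set and independent of (X, Z), and let Enc : 𝒳 × ℛ → 𝒞₁ × {0,1}^ℓ be the iKEM encapsulation; write (C₁, K) = Enc(X, R). Let D : {0,1}^ℓ × ℳ → 𝒞₂ be a deterministic DEM encryption over a finite message set ℳ. Assume: (i) SD((Z, C₁, K); (Z, C₁, U_ℓ)) ≤ σ, where U_ℓ is uniform on {0,1}^ℓ independent of (Z, C₁); and (ii) for all m₀, m₁ ∈ ℳ and every function f : 𝒞₂ → {0,1}, |Pr_{k ← U_ℓ, b ← U_1}[f(D(k, m_b)) = b] − 1/2| ≤ σ′. Then for every adversary given by functions A₁ : 𝒵 → ℳ × ℳ × 𝒮t and A₂ : 𝒮t × 𝒞₁ × 𝒞₂ → {0,1}, setting (m₀, m₁, st) = A₁(Z) and letting b be a uniform bit independent of everything else, |Pr[A₂(st, C₁, D(K, m_b)) = b] − 1/2| ≤ σ + σ′. -/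

import Mathlib

open scoped BigOperators Classical

/-- Statistical distance `SD(p;q) = max_{W ⊆ T} (Pr_p[W] − Pr_q[W])`. -/
noncomputable def SD {T : Type*} [Fintype T] (p q : T → ℝ) : ℝ :=
  Finset.univ.sup' Finset.univ_nonempty (fun W : Finset T => ∑ t ∈ W, p t - ∑ t ∈ W, q t)

lemma pushforward_sum {α β : Type*} [Fintype α] [Fintype β]
    (μ : α → ℝ) (F : α → β) (h : β → ℝ) :
    ∑ b, (∑ a, μ a * (if F a = b then 1 else 0)) * h b = ∑ a, μ a * h (F a) := by
  simp only [Finset.sum_mul, mul_ite, mul_one, mul_zero, ite_mul, zero_mul]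
  rw [Finset.sum_comm]
  refine Finset.sum_congr rfl fun a _ => ?_
  simp [Finset.sum_ite_eq]

lemma sum_sub_mul_le {T : Type*} [Fintype T] (p q g : T → ℝ)
    (hg0 : ∀ t, 0 ≤ g t) (hg1 : ∀ t, g t ≤ 1) :
    ∑ t, (p t - q t) * g t ≤ ∑ t ∈ Finset.univ.filter (fun t => q t ≤ p t), (p t - q t) := by
  have hsplit := Finset.sum_filter_add_sum_filter_not Finset.univ (fun t => q t ≤ p t)
    (fun t => (p t - q t) * g t)
  have h1 : ∑ t ∈ Finset.univ.filter (fun t => q t ≤ p t), (p t - q t) * g t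
      ≤ ∑ t ∈ Finset.univ.filter (fun t => q t ≤ p t), (p t - q t) := by
    refine Finset.sum_le_sum fun t ht => ?_
    have := (Finset.mem_filter.mp ht).2
    nlinarith [hg0 t, hg1 t]
  have h2 : ∑ t ∈ Finset.univ.filter (fun t => ¬ q t ≤ p t), (p t - q t) * g t ≤ 0 := by
    refine Finset.sum_nonpos fun t ht => ?_
    have := (Finset.mem_filter.mp ht).2
    nlinarith [hg0 t, hg1 t]
  linarith

lemma abs_sum_mul_sub_le_SD {T : Type*} [Fintype T] (p q g : T → ℝ)
    (hsum : ∑ t, p t = ∑ t, q t)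
    (hg0 : ∀ t, 0 ≤ g t) (hg1 : ∀ t, g t ≤ 1) :
    |∑ t, p t * g t - ∑ t, q t * g t| ≤ SD p q := by
  have hSD : ∀ W : Finset T, ∑ t ∈ W, p t - ∑ t ∈ W, q t ≤ SD p q := by
    intro W
    unfold SD
    exact Finset.le_sup' (fun W : Finset T => ∑ t ∈ W, p t - ∑ t ∈ W, q t) (Finset.mem_univ W)
  rw [abs_le]
  constructor
  · -- lower bound: -(SD) ≤ ∑ p g - ∑ q g,  i.e. ∑ q g - ∑ p g ≤ SD
    have h := sum_sub_mul_le q p g hg0 hg1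
    set W := Finset.univ.filter (fun t => p t ≤ q t) with hW
    have e1 : ∑ t ∈ W, (q t - p t) + ∑ t ∈ Wᶜ, (q t - p t) = ∑ t, (q t - p t) :=
      Finset.sum_add_sum_compl W _
    have e0 : ∑ t, (q t - p t) = 0 := by
      rw [Finset.sum_sub_distrib]; linarith
    have e2 := hSD Wᶜ
    rw [← Finset.sum_sub_distrib] at e2
    have e3 : ∑ t, (q t - p t) * g t = ∑ t, q t * g t - ∑ t, p t * g t := by
      rw [← Finset.sum_sub_distrib]
      exact Finset.sum_congr rfl fun t _ => by ring
    have e4 : ∑ t ∈ Wᶜ, (q t - p t) + ∑ t ∈ Wᶜ, (p t - q t) = 0 := by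
      rw [← Finset.sum_add_distrib]
      simp
    linarith
  · have h := sum_sub_mul_le p q g hg0 hg1
    have e2 := hSD (Finset.univ.filter (fun t => q t ≤ p t))
    rw [← Finset.sum_sub_distrib] at e2
    have e3 : ∑ t, (p t - q t) * g t = ∑ t, p t * g t - ∑ t, q t * g t := by
      rw [← Finset.sum_sub_distrib]
      exact Finset.sum_congr rfl fun t _ => by ring
    linarith

/-- one-time composition: IND-OT iKEM + IND-OT DEM ⇒ IND-OT hybrid
encryption: if the iKEM key `K` produced by `Enc(X, R)` is σ-close to uniform given
`(Z, C₁)`, and the DEM `D` is σ′-one-time secure, then every one-time adversary `(A₁, A₂)`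
against the hybrid encryption has advantage at most `σ + σ′`. -/
theorem hybrid_encryption_ind_ot
    {𝒳 𝒵 ℛ 𝒞₁ 𝒞₂ ℳ 𝒮t : Type*}
    [Fintype 𝒳] [Fintype 𝒵] [Fintype ℛ] [Fintype 𝒞₁] [Fintype 𝒞₂] [Fintype ℳ] [Fintype 𝒮t]
    [Nonempty ℛ]
    (ℓ : ℕ)
    (Enc : 𝒳 × ℛ → 𝒞₁ × (Fin ℓ → Bool))  -- iKEM encapsulation
    (D : (Fin ℓ → Bool) → ℳ → 𝒞₂)        -- deterministic DEM encryption
    (p : 𝒳 × 𝒵 → ℝ) (hp : ∀ w, 0 ≤ p w) (hsum : ∑ w : 𝒳 × 𝒵, p w = 1)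
    (σ σ' : ℝ)
    -- (i) IND-OT security of the iKEM: SD((Z, C₁, K); (Z, C₁, U_ℓ)) ≤ σ
    (hKEM : SD
      (fun w : 𝒵 × 𝒞₁ × (Fin ℓ → Bool) =>
        ∑ x : 𝒳, ∑ r : ℛ, (p (x, w.1) / (Fintype.card ℛ : ℝ)) *
          (if Enc (x, r) = (w.2.1, w.2.2) then 1 else 0))
      (fun w : 𝒵 × 𝒞₁ × (Fin ℓ → Bool) =>
        ∑ x : 𝒳, ∑ r : ℛ, (p (x, w.1) / ((Fintype.card ℛ : ℝ) * 2 ^ ℓ)) *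
          (if (Enc (x, r)).1 = w.2.1 then 1 else 0))
      ≤ σ)
    -- (ii) IND-OT security of the DEM under a uniform key
    (hDEM : ∀ m₀ m₁ : ℳ, ∀ f : 𝒞₂ → Bool,
      |(∑ k : Fin ℓ → Bool, (1 / (2 ^ ℓ : ℝ)) *
          ((1 / 2) * (if f (D k m₀) = false then 1 else 0)
            + (1 / 2) * (if f (D k m₁) = true then 1 else 0))) - 1 / 2| ≤ σ') :
    -- conclusion: every one-time adversary (A₁, A₂) has advantage ≤ σ + σ'
    ∀ (A₁ : 𝒵 → ℳ × ℳ × 𝒮t) (A₂ : 𝒮t × 𝒞₁ × 𝒞₂ → Bool),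
      |(∑ x : 𝒳, ∑ z : 𝒵, ∑ r : ℛ, (p (x, z) / (Fintype.card ℛ : ℝ)) *
          ((1 / 2) * (if A₂ ((A₁ z).2.2, (Enc (x, r)).1,
                D (Enc (x, r)).2 (A₁ z).1) = false then 1 else 0)
            + (1 / 2) * (if A₂ ((A₁ z).2.2, (Enc (x, r)).1,
                D (Enc (x, r)).2 (A₁ z).2.1) = true then 1 else 0))) - 1 / 2|
        ≤ σ + σ' := by
  intro A₁ A₂
  have hcard : (0 : ℝ) < (Fintype.card ℛ : ℝ) := by exact_mod_cast Fintype.card_pos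
  have h2l : (0 : ℝ) < (2 : ℝ) ^ ℓ := by positivity
  set g : 𝒵 × 𝒞₁ × (Fin ℓ → Bool) → ℝ := fun w =>
    (1 / 2) * (if A₂ ((A₁ w.1).2.2, w.2.1, D w.2.2 (A₁ w.1).1) = false then 1 else 0)
      + (1 / 2) * (if A₂ ((A₁ w.1).2.2, w.2.1, D w.2.2 (A₁ w.1).2.1) = true then 1 else 0)
    with hgdef
  set P : 𝒵 × 𝒞₁ × (Fin ℓ → Bool) → ℝ := fun w =>
    ∑ x : 𝒳, ∑ r : ℛ, (p (x, w.1) / (Fintype.card ℛ : ℝ)) *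
      (if Enc (x, r) = (w.2.1, w.2.2) then 1 else 0) with hPdef
  set Q : 𝒵 × 𝒞₁ × (Fin ℓ → Bool) → ℝ := fun w =>
    ∑ x : 𝒳, ∑ r : ℛ, (p (x, w.1) / ((Fintype.card ℛ : ℝ) * 2 ^ ℓ)) *
      (if (Enc (x, r)).1 = w.2.1 then 1 else 0) with hQdef
  have hg0 : ∀ w, 0 ≤ g w := by
    intro w; rw [hgdef]; dsimp only; split_ifs <;> norm_num
  have hg1 : ∀ w, g w ≤ 1 := by
    intro w; rw [hgdef]; dsimp only; split_ifs <;> norm_num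
  -- real distribution P as a pushforward
  have keyP : ∀ h : 𝒵 × 𝒞₁ × (Fin ℓ → Bool) → ℝ,
      ∑ w, P w * h w
        = ∑ z : 𝒵, ∑ x : 𝒳, ∑ r : ℛ,
            (p (x, z) / (Fintype.card ℛ : ℝ)) * h (z, Enc (x, r)) := by
    intro h
    rw [Fintype.sum_prod_type]
    refine Finset.sum_congr rfl fun z _ => ?_
    have hps := pushforward_sum (fun t : 𝒳 × ℛ => p (t.1, z) / (Fintype.card ℛ : ℝ))
      Enc (fun c => h (z, c))
    simpa [hPdef, Fintype.sum_prod_type] using hps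
  -- ideal distribution Q as a pushforward
  have keyQ : ∀ h : 𝒵 × 𝒞₁ × (Fin ℓ → Bool) → ℝ,
      ∑ w, Q w * h w
        = ∑ z : 𝒵, ∑ x : 𝒳, ∑ r : ℛ, ∑ k : Fin ℓ → Bool,
            (p (x, z) / ((Fintype.card ℛ : ℝ) * 2 ^ ℓ)) * h (z, (Enc (x, r)).1, k) := by
    intro h
    rw [Fintype.sum_prod_type]
    refine Finset.sum_congr rfl fun z _ => ?_
    have hps := pushforward_sum
      (fun t : (𝒳 × ℛ) × (Fin ℓ → Bool) => p (t.1.1, z) / ((Fintype.card ℛ : ℝ) * 2 ^ ℓ))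
      (fun t => ((Enc t.1).1, t.2)) (fun c => h (z, c))
    simp only [Fintype.sum_prod_type] at hps
    rw [hQdef]
    dsimp only
    rw [← hps, Fintype.sum_prod_type]
    refine Finset.sum_congr rfl fun c1 _ => Finset.sum_congr rfl fun c2 _ => ?_
    refine congrArg (fun s => s * h (z, c1, c2)) ?_
    refine Finset.sum_congr rfl fun x _ => Finset.sum_congr rfl fun r _ => ?_
    by_cases hc : (Enc (x, r)).1 = c1
    · simp [hc, Prod.ext_iff, Finset.sum_ite_eq']
    · simp [hc, Prod.ext_iff]
  -- total masses
  have hmass : ∑ z : 𝒵, ∑ x : 𝒳, ∑ _r : ℛ, p (x, z) / (Fintype.card ℛ : ℝ) = 1 := by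
    have : ∀ z x, ∑ _r : ℛ, p (x, z) / (Fintype.card ℛ : ℝ) = p (x, z) := by
      intro z x
      rw [Finset.sum_const, Finset.card_univ, nsmul_eq_mul]
      field_simp
    simp only [this]
    rw [Finset.sum_comm]
    rw [← Fintype.sum_prod_type]
    exact hsum
  have hPsum : ∑ w, P w = 1 := by
    have := keyP (fun _ => 1)
    simp only [mul_one] at this
    rw [this]; exact hmass
  have hQsum : ∑ w, Q w = 1 := by
    have := keyQ (fun _ => 1)
    simp only [mul_one] at this
    rw [this]
    have hk : ∀ z x, ∑ _k : Fin ℓ → Bool,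
        p (x, z) / ((Fintype.card ℛ : ℝ) * 2 ^ ℓ) = p (x, z) / (Fintype.card ℛ : ℝ) := by
      intro z x
      rw [Finset.sum_const, Finset.card_univ, nsmul_eq_mul]
      have hcardk : (Fintype.card (Fin ℓ → Bool) : ℝ) = 2 ^ ℓ := by
        simp [Fintype.card_fun]
      rw [hcardk]
      field_simp
    simp only [hk]
    exact hmass
  -- step 1: |real - ideal| ≤ σ
  have h1 : |∑ w, P w * g w - ∑ w, Q w * g w| ≤ σ :=
    le_trans (abs_sum_mul_sub_le_SD P Q g (hPsum.trans hQsum.symm) hg0 hg1) hKEM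
  -- step 2: |ideal - 1/2| ≤ σ'
  have hT : ∀ (z : 𝒵) (c1 : 𝒞₁),
      |(∑ k : Fin ℓ → Bool, (1 / (2 ^ ℓ : ℝ)) * g (z, c1, k)) - 1 / 2| ≤ σ' := by
    intro z c1
    have := hDEM (A₁ z).1 (A₁ z).2.1 (fun c2 => A₂ ((A₁ z).2.2, c1, c2))
    simpa [hgdef] using this
  have hQg : ∑ w, Q w * g w
      = ∑ z : 𝒵, ∑ x : 𝒳, ∑ r : ℛ, (p (x, z) / (Fintype.card ℛ : ℝ)) *
          (∑ k : Fin ℓ → Bool, (1 / (2 ^ ℓ : ℝ)) * g (z, (Enc (x, r)).1, k)) := by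
    rw [keyQ g]
    refine Finset.sum_congr rfl fun z _ => Finset.sum_congr rfl fun x _ =>
      Finset.sum_congr rfl fun r _ => ?_
    rw [Finset.mul_sum]
    refine Finset.sum_congr rfl fun k _ => ?_
    field_simp
  have h2 : |∑ w, Q w * g w - 1 / 2| ≤ σ' := by
    rw [hQg]
    set T : 𝒵 → 𝒳 → ℛ → ℝ := fun z x r =>
      ∑ k : Fin ℓ → Bool, (1 / (2 ^ ℓ : ℝ)) * g (z, (Enc (x, r)).1, k) with hTdef
    set a : 𝒵 → 𝒳 → ℝ := fun z x => p (x, z) / (Fintype.card ℛ : ℝ) with hadef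
    have ha0 : ∀ z x, 0 ≤ a z x := fun z x => div_nonneg (hp _) hcard.le
    have flat : ∀ f : 𝒵 → 𝒳 → ℛ → ℝ,
        ∑ t : 𝒵 × 𝒳 × ℛ, f t.1 t.2.1 t.2.2 = ∑ z, ∑ x, ∑ r, f z x r := by
      intro f
      rw [Fintype.sum_prod_type]
      exact Finset.sum_congr rfl fun z _ => Fintype.sum_prod_type ..
    rw [← flat (fun z x r => a z x * T z x r)]
    have hatot : ∑ t : 𝒵 × 𝒳 × ℛ, a t.1 t.2.1 = 1 := by
      rw [flat (fun z x _ => a z x)]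
      exact hmass
    have hdiff : ∑ t : 𝒵 × 𝒳 × ℛ, a t.1 t.2.1 * T t.1 t.2.1 t.2.2 - 1 / 2
        = ∑ t : 𝒵 × 𝒳 × ℛ, a t.1 t.2.1 * (T t.1 t.2.1 t.2.2 - 1 / 2) := by
      have : ∑ t : 𝒵 × 𝒳 × ℛ, a t.1 t.2.1 * (T t.1 t.2.1 t.2.2 - 1 / 2)
          = ∑ t : 𝒵 × 𝒳 × ℛ, (a t.1 t.2.1 * T t.1 t.2.1 t.2.2 - a t.1 t.2.1 * (1 / 2)) :=
        Finset.sum_congr rfl fun t _ => by ring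
      rw [this, Finset.sum_sub_distrib, ← Finset.sum_mul, hatot]
      ring
    rw [hdiff]
    calc |∑ t : 𝒵 × 𝒳 × ℛ, a t.1 t.2.1 * (T t.1 t.2.1 t.2.2 - 1 / 2)|
        ≤ ∑ t : 𝒵 × 𝒳 × ℛ, |a t.1 t.2.1 * (T t.1 t.2.1 t.2.2 - 1 / 2)| :=
          Finset.abs_sum_le_sum_abs _ _
      _ ≤ ∑ t : 𝒵 × 𝒳 × ℛ, a t.1 t.2.1 * σ' := by
          refine Finset.sum_le_sum fun t _ => ?_
          rw [abs_mul, abs_of_nonneg (ha0 _ _)]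
          exact mul_le_mul_of_nonneg_left (hT _ _) (ha0 _ _)
      _ = σ' := by rw [← Finset.sum_mul, hatot, one_mul]
  -- conclude
  have hgoal : (∑ x : 𝒳, ∑ z : 𝒵, ∑ r : ℛ, (p (x, z) / (Fintype.card ℛ : ℝ)) *
      ((1 / 2) * (if A₂ ((A₁ z).2.2, (Enc (x, r)).1,
            D (Enc (x, r)).2 (A₁ z).1) = false then 1 else 0)
        + (1 / 2) * (if A₂ ((A₁ z).2.2, (Enc (x, r)).1,
            D (Enc (x, r)).2 (A₁ z).2.1) = true then 1 else 0)))
      = ∑ w, P w * g w := by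
    rw [keyP g, Finset.sum_comm]
  rw [hgoal]
  calc |∑ w, P w * g w - 1 / 2|
      = |(∑ w, P w * g w - ∑ w, Q w * g w) + (∑ w, Q w * g w - 1 / 2)| :=
        (congrArg abs (sub_add_sub_cancel _ _ _)).symm
    _ ≤ |∑ w, P w * g w - ∑ w, Q w * g w| + |∑ w, Q w * g w - 1 / 2| := abs_add_le _ _
    _ ≤ σ + σ' := add_le_add h1 h2
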